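/- Let A be a commutative ring with identity and let (M_n)_{n ∈ ℕ} be an inverse system of A-modules, each of finite length. If N is a finitely presented A-module, then the natural A-module map (lim_n M_n) ⊗_A N → lim_n (M_n ⊗_A N), induced by the universal property of the inverse limit from the maps (lim_n M_n) ⊗_A N → M_n ⊗_A N, is an isomorphism. -/

import Mathlib

open TensorProduct

/-- The inverse (projective) limit of an `ℕ`-indexed inverse system of `A`-modules, realized as
the submodule of compatible families in the product. -/
def InvLimit {A : Type*} [CommRing A] (M : ℕ → Type*) [∀ n, AddCommGroup (M n)]
    [∀ n, Module A (M n)] (f : ∀ n, M (n + 1) →ₗ[A] M n) : Submodule A (∀ n, M n) where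
  carrier := {x | ∀ n, f n (x (n + 1)) = x n}
  add_mem' := by intro x y hx hy n; simp [hx n, hy n]
  zero_mem' := by intro n; simp
  smul_mem' := by intro a x hx n; simp [hx n]

/-- The canonical projection from the inverse limit to the `n`-th module. -/
def limProj {A : Type*} [CommRing A] (M : ℕ → Type*) [∀ n, AddCommGroup (M n)]
    [∀ n, Module A (M n)] (f : ∀ n, M (n + 1) →ₗ[A] M n) (n : ℕ) :
    InvLimit M f →ₗ[A] M n :=
  (LinearMap.proj n).comp (InvLimit M f).subtype

@[simp] lemma limProj_apply {A : Type*} [CommRing A] (M : ℕ → Type*) [∀ n, AddCommGroup (M n)]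
    [∀ n, Module A (M n)] (f : ∀ n, M (n + 1) →ₗ[A] M n) (n : ℕ) (x : InvLimit M f) :
    limProj M f n x = x.1 n := rfl

lemma invLimit_prop {A : Type*} [CommRing A] {M : ℕ → Type*} [∀ n, AddCommGroup (M n)]
    [∀ n, Module A (M n)] {f : ∀ n, M (n + 1) →ₗ[A] M n} (x : InvLimit M f) (n : ℕ) :
    f n (x.1 (n + 1)) = x.1 n := x.2 n

lemma tensorMem {A : Type*} [CommRing A] (M : ℕ → Type*) [∀ n, AddCommGroup (M n)]
    [∀ n, Module A (M n)] (f : ∀ n, M (n + 1) →ₗ[A] M n)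
    (N : Type*) [AddCommGroup N] [Module A N] (x : ↥(InvLimit M f) ⊗[A] N) :
    (fun n => LinearMap.rTensor N (limProj M f n) x) ∈
      InvLimit (fun n => M n ⊗[A] N) (fun n => LinearMap.rTensor N (f n)) := by
  intro n
  induction x using TensorProduct.induction_on with
  | zero => simp
  | tmul m y =>
      simp only [LinearMap.rTensor_tmul, limProj_apply]
      rw [invLimit_prop m n]
  | add a b ha hb => simp only [map_add, ha, hb]

section ML

variable {A : Type*} [CommRing A] {M P : ℕ → Type*}
  [∀ n, AddCommGroup (M n)] [∀ n, Module A (M n)]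
  [∀ n, AddCommGroup (P n)] [∀ n, Module A (P n)]

/-- Mittag-Leffler style surjectivity: a compatible family in an inverse system `P`
lifts along levelwise surjections from an Artinian inverse system `M`. -/
lemma ml_surjective [∀ n, IsArtinian A (M n)]
    (f : ∀ n, M (n + 1) →ₗ[A] M n) (g : ∀ n, P (n + 1) →ₗ[A] P n)
    (π : ∀ n, M n →ₗ[A] P n)
    (hπ : ∀ n, Function.Surjective (π n))
    (hcomm : ∀ n x, π n (f n x) = g n (π (n + 1) x))
    (q : ∀ n, P n) (hq : ∀ n, g n (q (n + 1)) = q n) :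
    ∃ x : ∀ n, M n, (∀ n, f n (x (n + 1)) = x n) ∧ ∀ n, π n (x n) = q n := by
  classical
  -- iterated images of the fibers
  let U : ℕ → ∀ n, Set (M n) := fun k =>
    Nat.rec (fun n => {x | π n x = q n}) (fun _ ih n => f n '' ih (n + 1)) k
  have hU0 : ∀ n, U 0 n = {x | π n x = q n} := fun _ => rfl
  have hUs : ∀ k n, U (k + 1) n = f n '' U k (n + 1) := fun _ _ => rfl
  have hUne : ∀ k n, (U k n).Nonempty := by
    intro k
    induction k with
    | zero => intro n; obtain ⟨x, hx⟩ := hπ n (q n); exact ⟨x, hx⟩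
    | succ k ih => intro n; exact ((ih (n + 1)).image (f n))
  have hUmono : ∀ k n, U (k + 1) n ⊆ U k n := by
    intro k
    induction k with
    | zero =>
        intro n x hx
        obtain ⟨y, hy, rfl⟩ := hx
        show π n (f n y) = q n
        rw [hcomm n y, hy, hq]
    | succ k ih =>
        intro n
        exact Set.image_mono (ih (n + 1))
  have hUanti : ∀ n, Antitone fun k => U k n := fun n =>
    antitone_nat_of_succ_le fun k => hUmono k n
  -- the corresponding difference submodules
  let V : ℕ → ∀ n, Submodule A (M n) := fun k =>
    Nat.rec (fun n => LinearMap.ker (π n)) (fun _ ih n => Submodule.map (f n) (ih (n + 1))) k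
  have hVs : ∀ k n, V (k + 1) n = Submodule.map (f n) (V k (n + 1)) := fun _ _ => rfl
  have hsub : ∀ k n, ∀ x ∈ U k n, ∀ y ∈ U k n, x - y ∈ V k n := by
    intro k
    induction k with
    | zero =>
        intro n x hx y hy
        have : π n (x - y) = 0 := by
          rw [map_sub, hx, hy, sub_self]
        exact this
    | succ k ih =>
        intro n x hx y hy
        obtain ⟨x', hx', rfl⟩ := hx
        obtain ⟨y', hy', rfl⟩ := hy
        rw [← map_sub]
        exact ⟨x' - y', ih (n + 1) x' hx' y' hy', rfl⟩
  have hadd : ∀ k n, ∀ x ∈ U k n, ∀ v ∈ V k n, x + v ∈ U k n := by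
    intro k
    induction k with
    | zero =>
        intro n x hx v hv
        show π n (x + v) = q n
        rw [map_add, hx, hv, add_zero]
    | succ k ih =>
        intro n x hx v hv
        obtain ⟨x', hx', rfl⟩ := hx
        obtain ⟨v', hv', rfl⟩ := hv
        rw [← map_add]
        exact ⟨x' + v', ih (n + 1) x' hx' v' hv', rfl⟩
  have hVmono : ∀ k n, V (k + 1) n ≤ V k n := by
    intro k
    induction k with
    | zero =>
        intro n x hx
        obtain ⟨y, hy, rfl⟩ := hx
        show π n (f n y) = 0
        rw [hcomm n y, hy, map_zero]
    | succ k ih =>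
        intro n
        exact Submodule.map_mono (ih (n + 1))
  -- stabilization of the V-chain
  have hVanti : ∀ n, Antitone fun k => V k n := fun n =>
    antitone_nat_of_succ_le fun k => hVmono k n
  have hstab : ∀ n, ∃ c, ∀ k, c ≤ k → V k n = V c n := by
    intro n
    obtain ⟨c, hc⟩ := IsArtinian.monotone_stabilizes (R := A) (M := M n)
      ⟨fun k => OrderDual.toDual (V k n), fun i j hij => hVanti n hij⟩
    exact ⟨c, fun k hk => ((hc k hk).symm : V k n = V c n)⟩
  choose c hc using hstab
  -- stabilization of the U-chain
  have hUstab : ∀ n k, c n ≤ k → U k n = U (c n) n := by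
    intro n k hk
    obtain ⟨x, hx⟩ := hUne k n
    apply Set.Subset.antisymm (hUanti n hk)
    intro y hy
    have hxc : x ∈ U (c n) n := hUanti n hk hx
    have : y - x ∈ V (c n) n := hsub (c n) n y hy x hxc
    rw [← hc n k hk] at this
    have := hadd k n x hx (y - x) this
    simpa using this
  set W : ∀ n, Set (M n) := fun n => U (c n) n with hW
  have hWne : ∀ n, (W n).Nonempty := fun n => hUne (c n) n
  have hWfib : ∀ n, ∀ x ∈ W n, π n x = q n := by
    intro n x hx
    exact hUanti n (Nat.zero_le (c n)) hx
  have hWstep : ∀ n, ∀ w ∈ W n, ∃ w', w' ∈ W (n + 1) ∧ f n w' = w := by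
    intro n w hw
    set k := max (c n) (c (n + 1)) with hk
    have h1 : w ∈ U (k + 1) n := by
      rw [hUstab n (k + 1) (le_trans (le_max_left _ _) (Nat.le_succ k))]
      exact hw
    rw [hUs] at h1
    obtain ⟨w', hw', rfl⟩ := h1
    refine ⟨w', ?_, rfl⟩
    show w' ∈ U (c (n + 1)) (n + 1)
    rw [← hUstab (n + 1) k (le_max_right _ _)]
    exact hw'
  choose F hF1 hF2 using hWstep
  let seq : ∀ n, {w : M n // w ∈ W n} := fun n =>
    Nat.rec ⟨(hWne 0).choose, (hWne 0).choose_spec⟩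
      (fun n p => ⟨F n p.1 p.2, hF1 n p.1 p.2⟩) n
  refine ⟨fun n => (seq n).1, fun n => hF2 n (seq n).1 (seq n).2,
    fun n => hWfib n (seq n).1 (seq n).2⟩

end ML

section Free

variable {A : Type*} [CommRing A]

/-- Naturality of `TensorProduct.piScalarRight`. -/
lemma piScalarRight_naturality {T T' : Type*} [AddCommGroup T] [Module A T]
    [AddCommGroup T'] [Module A T'] (φ : T →ₗ[A] T') (k : ℕ) (x : T ⊗[A] (Fin k → A)) :
    TensorProduct.piScalarRight A A T' (Fin k) (LinearMap.rTensor (Fin k → A) φ x)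
      = fun i => φ (TensorProduct.piScalarRight A A T (Fin k) x i) := by
  induction x using TensorProduct.induction_on with
  | zero => funext i; simp
  | tmul t g =>
      funext i
      simp [TensorProduct.piScalarRightHom_tmul]
  | add a b ha hb =>
      funext i
      simp [map_add, ha, hb]

variable {M : ℕ → Type*} [∀ n, AddCommGroup (M n)] [∀ n, Module A (M n)]
  (f : ∀ n, M (n + 1) →ₗ[A] M n)

lemma free_inj (k : ℕ) (x : ↥(InvLimit M f) ⊗[A] (Fin k → A))
    (hx : ∀ n, LinearMap.rTensor (Fin k → A) (limProj M f n) x = 0) : x = 0 := by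
  set e := TensorProduct.piScalarRight A A (↥(InvLimit M f)) (Fin k)
  have he : e x = 0 := by
    funext i
    apply Subtype.ext
    funext n
    have h := piScalarRight_naturality (A := A) (limProj M f n) k x
    rw [hx n, map_zero] at h
    have := congrFun h.symm i
    simpa [e] using this
  have := congrArg e.symm he
  simpa using this

lemma free_surj (k : ℕ) (y : ∀ n, M n ⊗[A] (Fin k → A))
    (hy : ∀ n, LinearMap.rTensor (Fin k → A) (f n) (y (n + 1)) = y n) :
    ∃ x : ↥(InvLimit M f) ⊗[A] (Fin k → A),
      ∀ n, LinearMap.rTensor (Fin k → A) (limProj M f n) x = y n := by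
  have hz : ∀ i, (fun n => TensorProduct.piScalarRight A A (M n) (Fin k) (y n) i)
      ∈ InvLimit M f := by
    intro i n
    have h := piScalarRight_naturality (A := A) (f n) k (y (n + 1))
    rw [hy n] at h
    exact (congrFun h i).symm
  let z : Fin k → ↥(InvLimit M f) := fun i => ⟨_, hz i⟩
  refine ⟨(TensorProduct.piScalarRight A A (↥(InvLimit M f)) (Fin k)).symm z, fun n => ?_⟩
  apply (TensorProduct.piScalarRight A A (M n) (Fin k)).injective
  rw [piScalarRight_naturality]
  funext i
  simp only [LinearEquiv.apply_symm_apply]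
  rfl

lemma artinian_tensor (T : Type*) [AddCommGroup T] [Module A T] [IsArtinian A T] (k : ℕ) :
    IsArtinian A (T ⊗[A] (Fin k → A)) :=
  isArtinian_of_linearEquiv (TensorProduct.piScalarRight A A T (Fin k)).symm

end Free

/-- Lemma 2.1(a): for an inverse system `(M n)` of `A`-modules of finite length and a finitely
presented `A`-module `N`, the natural map `(lim M n) ⊗ N → lim (M n ⊗ N)` is an isomorphism. -/
theorem tensor_limit_of_finitePresentation {A : Type*} [CommRing A] (M : ℕ → Type*)
    [∀ n, AddCommGroup (M n)] [∀ n, Module A (M n)] (f : ∀ n, M (n + 1) →ₗ[A] M n)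
    (hM : ∀ n, IsFiniteLength A (M n))
    (N : Type*) [AddCommGroup N] [Module A N] [Module.FinitePresentation A N] :
    Function.Bijective (fun x : ↥(InvLimit M f) ⊗[A] N =>
      (⟨fun n => LinearMap.rTensor N (limProj M f n) x, tensorMem M f N x⟩ :
        InvLimit (fun n => M n ⊗[A] N) (fun n => LinearMap.rTensor N (f n)))) := by
  classical
  haveI hart : ∀ n, IsArtinian A (M n) := fun n =>
    (isFiniteLength_iff_isNoetherian_isArtinian.mp (hM n)).2
  obtain ⟨k, p, hp⟩ := Module.Finite.exists_fin' A N
  have hker : (LinearMap.ker p).FG := Module.FinitePresentation.fg_ker p hp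
  obtain ⟨m, s, hs⟩ := Submodule.fg_iff_exists_fin_generating_family.mp hker
  set g : (Fin m → A) →ₗ[A] (Fin k → A) := (Pi.basisFun A (Fin m)).constr A s with hgdef
  have hrange : LinearMap.range g = LinearMap.ker p := by
    rw [hgdef, Module.Basis.constr_range, hs]
  have hgp : Function.Exact g p := LinearMap.exact_iff.mpr hrange.symm
  have hpg : p ∘ₗ g = 0 := by
    apply LinearMap.ext
    intro x
    have hmem : g x ∈ LinearMap.ker p := by rw [← hrange]; exact ⟨x, rfl⟩
    exact hmem
  haveI : ∀ n, IsArtinian A (M n ⊗[A] (Fin k → A)) := fun n => artinian_tensor (M n) k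
  haveI : ∀ n, IsArtinian A (M n ⊗[A] (Fin m → A)) := fun n => artinian_tensor (M n) m
  have key : ∀ x : ↥(InvLimit M f) ⊗[A] N,
      (∀ n, LinearMap.rTensor N (limProj M f n) x = 0) → x = 0 := by
    intro x hx
    obtain ⟨w, rfl⟩ := LinearMap.lTensor_surjective (↥(InvLimit M f)) hp x
    set wn : ∀ n, M n ⊗[A] (Fin k → A) :=
      fun n => LinearMap.rTensor (Fin k → A) (limProj M f n) w with hwn
    have hw0 : ∀ n, LinearMap.lTensor (M n) p (wn n) = 0 := by
      intro n
      rw [hwn, ← LinearMap.comp_apply, LinearMap.lTensor_comp_rTensor,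
        ← LinearMap.rTensor_comp_lTensor, LinearMap.comp_apply]
      exact hx n
    have hEx : ∀ n, Function.Exact (LinearMap.lTensor (M n) g) (LinearMap.lTensor (M n) p) :=
      fun n => lTensor_exact (M n) hgp hp
    have hwr : ∀ n, wn n ∈ LinearMap.range (LinearMap.lTensor (M n) g) := fun n =>
      (hEx n (wn n)).mp (hw0 n)
    have hmaps : ∀ n, ∀ x ∈ LinearMap.range (LinearMap.lTensor (M (n + 1)) g),
        LinearMap.rTensor (Fin k → A) (f n) x ∈ LinearMap.range (LinearMap.lTensor (M n) g) := by
      rintro n _ ⟨u, rfl⟩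
      refine ⟨LinearMap.rTensor (Fin m → A) (f n) u, ?_⟩
      rw [← LinearMap.comp_apply, LinearMap.lTensor_comp_rTensor,
        ← LinearMap.rTensor_comp_lTensor, LinearMap.comp_apply]
    obtain ⟨u, hu1, hu2⟩ := ml_surjective
      (fun n => LinearMap.rTensor (Fin m → A) (f n))
      (fun n => (LinearMap.rTensor (Fin k → A) (f n)).restrict (hmaps n))
      (fun n => (LinearMap.lTensor (M n) g).rangeRestrict)
      (fun n => LinearMap.surjective_rangeRestrict _)
      (fun n x => by
        apply Subtype.ext
        show LinearMap.lTensor (M n) g (LinearMap.rTensor (Fin m → A) (f n) x)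
          = LinearMap.rTensor (Fin k → A) (f n) (LinearMap.lTensor (M (n + 1)) g x)
        rw [← LinearMap.comp_apply, LinearMap.lTensor_comp_rTensor,
          ← LinearMap.rTensor_comp_lTensor, LinearMap.comp_apply])
      (fun n => ⟨wn n, hwr n⟩)
      (fun n => Subtype.ext (tensorMem M f (Fin k → A) w n))
    have hu2' : ∀ n, LinearMap.lTensor (M n) g (u n) = wn n := fun n =>
      congrArg Subtype.val (hu2 n)
    obtain ⟨v, hv⟩ := free_surj f m u hu1
    have hgv : LinearMap.lTensor (↥(InvLimit M f)) g v = w := by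
      rw [← sub_eq_zero]
      apply free_inj f k
      intro n
      rw [map_sub, ← LinearMap.comp_apply, LinearMap.rTensor_comp_lTensor,
        ← LinearMap.lTensor_comp_rTensor, LinearMap.comp_apply, hv n, hu2' n, hwn, sub_self]
    rw [← hgv, ← LinearMap.comp_apply, ← LinearMap.lTensor_comp, hpg,
      LinearMap.lTensor_zero, LinearMap.zero_apply]
  constructor
  · intro x₁ x₂ h
    have h' : ∀ n, LinearMap.rTensor N (limProj M f n) x₁
        = LinearMap.rTensor N (limProj M f n) x₂ := fun n =>
      congrFun (congrArg Subtype.val h) n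
    rw [← sub_eq_zero]
    apply key
    intro n
    rw [map_sub, h' n, sub_self]
  · rintro ⟨y, hy⟩
    obtain ⟨w, hw1, hw2⟩ := ml_surjective
      (fun n => LinearMap.rTensor (Fin k → A) (f n))
      (fun n => LinearMap.rTensor N (f n))
      (fun n => LinearMap.lTensor (M n) p)
      (fun n => LinearMap.lTensor_surjective (M n) hp)
      (fun n x => by
        rw [← LinearMap.comp_apply, LinearMap.lTensor_comp_rTensor,
          ← LinearMap.rTensor_comp_lTensor, LinearMap.comp_apply])
      y (fun n => hy n)
    obtain ⟨v, hv⟩ := free_surj f k w hw1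
    refine ⟨LinearMap.lTensor (↥(InvLimit M f)) p v, Subtype.ext (funext fun n => ?_)⟩
    show LinearMap.rTensor N (limProj M f n) (LinearMap.lTensor (↥(InvLimit M f)) p v) = y n
    rw [← LinearMap.comp_apply, LinearMap.rTensor_comp_lTensor,
      ← LinearMap.lTensor_comp_rTensor, LinearMap.comp_apply, hv n]
    exact hw2 n
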